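/- Let r ≥ 3 and n₁ ≥ n₂ ≥ ⋯ ≥ n_r ≥ 1. If G is a subgraph of the complete r-partite graph K_{n₁,n₂,…,n_r} that contains no multipartite path on three vertices, then the number of edges of G is at most n₁n₂ + n₃n₄ + ⋯ + n_{r−2}n_{r−1} when r is odd, and at most n₁n₂ + n₃n₄ + ⋯ + n_{r−1}n_r when r is even. -/

import Mathlib

open Finset

/-- The complete `r`-partite graph with parts of sizes `n 0, n 1, …, n (r-1)`. -/
def Kpartite (r : ℕ) (n : ℕ → ℕ) : SimpleGraph ((i : Fin r) × Fin (n i)) :=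
  SimpleGraph.completeMultipartiteGraph fun i : Fin r => Fin (n i)

/-- The edge-coloring `c` contains a rainbow 3-cycle in `G`. -/
def RainbowC3 {V α : Type*} (G : SimpleGraph V) (c : Sym2 V → α) : Prop :=
  ∃ a b d : V, G.Adj a b ∧ G.Adj b d ∧ G.Adj d a ∧
    c s(a, b) ≠ c s(b, d) ∧ c s(b, d) ≠ c s(d, a) ∧ c s(a, b) ≠ c s(d, a)

/-- The edge-coloring `c` contains a rainbow 4-cycle in `G`. -/
def RainbowC4 {V α : Type*} (G : SimpleGraph V) (c : Sym2 V → α) : Prop :=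
  ∃ a b d e : V, G.Adj a b ∧ G.Adj b d ∧ G.Adj d e ∧ G.Adj e a ∧
    a ≠ d ∧ b ≠ e ∧
    c s(a, b) ≠ c s(b, d) ∧ c s(a, b) ≠ c s(d, e) ∧ c s(a, b) ≠ c s(e, a) ∧
    c s(b, d) ≠ c s(d, e) ∧ c s(b, d) ≠ c s(e, a) ∧ c s(d, e) ≠ c s(e, a)

/-- The coloring `c` uses every one of the `k` colors on at least one edge of `G`
(i.e. it uses exactly `k` colors). -/
def SurjOnEdges {V : Type*} {k : ℕ} (G : SimpleGraph V) (c : Sym2 V → Fin k) : Prop :=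
  ∀ i : Fin k, ∃ e ∈ G.edgeSet, c e = i

/-- `G` (a subgraph of an `r`-partite graph) contains a cycle whose vertex set meets
at least three distinct parts. -/
def HasMultipartiteCycle {r : ℕ} {n : ℕ → ℕ}
    (G : SimpleGraph ((i : Fin r) × Fin (n i))) : Prop :=
  ∃ (v : (i : Fin r) × Fin (n i)) (w : G.Walk v v), w.IsCycle ∧
    3 ≤ (w.support.map Sigma.fst).toFinset.card

/-- `G` contains a path on three vertices meeting three distinct parts. -/
def HasMultipartiteP3 {r : ℕ} {n : ℕ → ℕ}
    (G : SimpleGraph ((i : Fin r) × Fin (n i))) : Prop :=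
  ∃ x y z : (i : Fin r) × Fin (n i), G.Adj x y ∧ G.Adj y z ∧
    x.1 ≠ y.1 ∧ y.1 ≠ z.1 ∧ x.1 ≠ z.1


section AuxNoP3


def Ent {β : Type*} (l : List (β × β)) : Multiset β :=
  (l.map Prod.fst : Multiset β) + (l.map Prod.snd : Multiset β)

def mval {β : Type*} (n : β → ℕ) (l : List (β × β)) : ℕ :=
  (l.map fun p => n p.1 * n p.2).sum

lemma Ent_cons {β : Type*} (p : β × β) (l : List (β × β)) :
    Ent (p :: l) = p.1 ::ₘ p.2 ::ₘ Ent l := by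
  simp only [Ent, List.map_cons, ← Multiset.cons_coe, ← Multiset.singleton_add]
  abel

lemma Ent_append {β : Type*} (a b : List (β × β)) : Ent (a ++ b) = Ent a + Ent b := by
  simp only [Ent, List.map_append, ← Multiset.coe_add]
  abel

lemma mval_cons {β : Type*} (n : β → ℕ) (p : β × β) (l : List (β × β)) :
    mval n (p :: l) = n p.1 * n p.2 + mval n l := by
  simp [mval]

lemma mem_Ent {β : Type*} {l : List (β × β)} {x : β} :
    x ∈ Ent l ↔ ∃ p ∈ l, p.1 = x ∨ p.2 = x := by
  simp only [Ent, Multiset.mem_add, Multiset.mem_coe, List.mem_map]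
  constructor
  · rintro (⟨p, hp, rfl⟩ | ⟨p, hp, rfl⟩) <;> exact ⟨p, hp, by tauto⟩
  · rintro ⟨p, hp, (rfl | rfl)⟩
    · exact Or.inl ⟨p, hp, rfl⟩
    · exact Or.inr ⟨p, hp, rfl⟩

lemma fst_mem_Ent {β : Type*} {l : List (β × β)} {p : β × β} (hp : p ∈ l) : p.1 ∈ Ent l :=
  mem_Ent.2 ⟨p, hp, Or.inl rfl⟩

lemma snd_mem_Ent {β : Type*} {l : List (β × β)} {p : β × β} (hp : p ∈ l) : p.2 ∈ Ent l :=
  mem_Ent.2 ⟨p, hp, Or.inr rfl⟩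

lemma mval_congr {β : Type*} {n m : β → ℕ} {l : List (β × β)}
    (h : ∀ x ∈ Ent l, n x = m x) : mval n l = mval m l := by
  induction l with
  | nil => rfl
  | cons p l ih =>
      rw [mval_cons, mval_cons,
        h p.1 (fst_mem_Ent List.mem_cons_self),
        h p.2 (snd_mem_Ent List.mem_cons_self),
        ih fun x hx => h x (by rw [Ent_cons]; exact Multiset.mem_cons_of_mem (Multiset.mem_cons_of_mem hx))]

lemma extract {β : Type*} {l : List (β × β)} {x : β} (h : x ∈ Ent l) :
    ∃ y l₂, Ent l = x ::ₘ y ::ₘ Ent l₂ ∧ ∀ n : β → ℕ, mval n l = n x * n y + mval n l₂ := by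
  rcases Multiset.mem_add.1 h with h | h <;> rw [Multiset.mem_coe, List.mem_map] at h
  · obtain ⟨p, hp, rfl⟩ := h
    obtain ⟨l1, l2, rfl⟩ := List.append_of_mem hp
    refine ⟨p.2, l1 ++ l2, ?_, fun n => ?_⟩
    · simp only [Ent_append, Ent_cons, ← Multiset.singleton_add]; abel
    · simp only [mval, List.map_append, List.map_cons, List.sum_append, List.sum_cons]; ring
  · obtain ⟨p, hp, rfl⟩ := h
    obtain ⟨l1, l2, rfl⟩ := List.append_of_mem hp
    refine ⟨p.1, l1 ++ l2, ?_, fun n => ?_⟩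
    · simp only [Ent_append, Ent_cons, ← Multiset.singleton_add]; abel
    · simp only [mval, List.map_append, List.map_cons, List.sum_append, List.sum_cons]; ring



lemma mval_map {β γ : Type*} (n : γ → ℕ) (g : β → γ) (l : List (β × β)) :
    mval n (l.map (Prod.map g g)) = mval (fun x => n (g x)) l := by
  induction l with
  | nil => rfl
  | cons p l ih => simp [mval_cons, ih, Prod.map]

lemma Ent_map {β γ : Type*} (g : β → γ) (l : List (β × β)) :
    Ent (l.map (Prod.map g g)) = (Ent l).map g := by
  induction l with
  | nil => rfl
  | cons p l ih => simp [Ent_cons, ih, Prod.map]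

lemma lemA {β : Type*} [DecidableEq β] (a : β → β → ℕ) :
    ∀ (s : Finset β) (n : β → ℕ), (∀ i ∈ s, ∑ j ∈ s, a i j ≤ n i) →
    ∃ l : List (β × β), (∀ x ∈ Ent l, x ∈ s) ∧ (Ent l).Nodup ∧
      ∑ p ∈ s.offDiag, a p.1 p.2 * a p.2 p.1 ≤ 2 * mval n l := by
  intro s
  induction s using Finset.strongInduction with
  | _ s ih =>
    intro n hrow
    rcases s.eq_empty_or_nonempty with rfl | hne
    · exact ⟨[], by simp [Ent], by simp [Ent], by simp⟩
    obtain ⟨i0, hi0s, hi0min⟩ := s.exists_min_image n hne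
    have hins : s = insert i0 (s.erase i0) := (Finset.insert_erase hi0s).symm
    have hi0ns' : i0 ∉ s.erase i0 := Finset.notMem_erase _ _
    rcases (s.erase i0).eq_empty_or_nonempty with h1 | hne'
    · refine ⟨[], by simp [Ent], by simp [Ent], ?_⟩
      rw [hins, h1]
      simp
    obtain ⟨js, hjs, hjmax⟩ := (s.erase i0).exists_max_image (fun j => a j i0) hne'
    have hjne : js ≠ i0 := Finset.ne_of_mem_erase hjs
    have hjss : js ∈ s := Finset.mem_of_mem_erase hjs
    have htle : a js i0 ≤ n js :=
      le_trans (Finset.single_le_sum (f := fun j => a js j) (fun j _ => Nat.zero_le _) hi0s)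
        (hrow js hjss)
    set t := a js i0 with ht
    set n' := Function.update n js (n js - t) with hn'
    have hrow' : ∀ i ∈ s.erase i0, ∑ j ∈ s.erase i0, a i j ≤ n' i := by
      intro i his'
      have his : i ∈ s := Finset.mem_of_mem_erase his'
      have h1 : ∑ j ∈ s.erase i0, a i j + a i i0 = ∑ j ∈ s, a i j :=
        Finset.sum_erase_add s _ hi0s
      have h2 := hrow i his
      by_cases hij : i = js
      · subst hij
        have : n' i = n i - t := by rw [hn', Function.update_self]
        rw [this]; omega
      · have : n' i = n i := Function.update_of_ne hij _ _
        rw [this]; omega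
    obtain ⟨l', hl's, hl'nd, hl'bound⟩ := ih (s.erase i0) (Finset.erase_ssubset hi0s) n' hrow'
    -- splitting the off-diagonal sum
    have hd1 : Disjoint ((s.erase i0).offDiag) ({i0} ×ˢ s.erase i0) := by
      rw [Finset.disjoint_left]
      rintro ⟨p1, p2⟩ hA hB
      simp only [Finset.mem_offDiag, Finset.mem_product, Finset.mem_singleton] at hA hB
      exact hi0ns' (hB.1 ▸ hA.1)
    have hd2 : Disjoint ((s.erase i0).offDiag ∪ {i0} ×ˢ s.erase i0) (s.erase i0 ×ˢ {i0}) := by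
      rw [Finset.disjoint_left]
      rintro ⟨p1, p2⟩ hA hB
      simp only [Finset.mem_union, Finset.mem_offDiag, Finset.mem_product,
        Finset.mem_singleton] at hA hB
      rcases hA with hA | hA
      · exact hi0ns' (hB.2 ▸ hA.2.1)
      · exact hi0ns' (hB.2 ▸ hA.2)
    have hsplit : ∑ p ∈ s.offDiag, a p.1 p.2 * a p.2 p.1
        = ∑ p ∈ (s.erase i0).offDiag, a p.1 p.2 * a p.2 p.1
          + 2 * ∑ j ∈ s.erase i0, a i0 j * a j i0 := by
      conv_lhs => rw [hins]
      rw [Finset.offDiag_insert hi0ns', Finset.sum_union hd2, Finset.sum_union hd1]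
      rw [Finset.sum_product, Finset.sum_singleton, Finset.sum_product_right, Finset.sum_singleton]
      have : ∑ j ∈ s.erase i0, a j i0 * a i0 j = ∑ j ∈ s.erase i0, a i0 j * a j i0 := by
        apply Finset.sum_congr rfl; intros; ring
      rw [this]; ring
    have hX : ∑ j ∈ s.erase i0, a i0 j * a j i0 ≤ n i0 * t := by
      calc ∑ j ∈ s.erase i0, a i0 j * a j i0
          ≤ ∑ j ∈ s.erase i0, a i0 j * t :=
            Finset.sum_le_sum fun j hj => Nat.mul_le_mul_left _ (hjmax j hj)
        _ = (∑ j ∈ s.erase i0, a i0 j) * t := by rw [Finset.sum_mul]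
        _ ≤ (∑ j ∈ s, a i0 j) * t :=
            Nat.mul_le_mul_right _ (Finset.sum_le_sum_of_subset (Finset.erase_subset _ _))
        _ ≤ n i0 * t := Nat.mul_le_mul_right _ (hrow i0 hi0s)
    by_cases hmem : js ∈ Ent l'
    · obtain ⟨k, l₂, hE, hmv⟩ := extract hmem
      have hknd : (js ::ₘ k ::ₘ Ent l₂).Nodup := hE ▸ hl'nd
      have hjk : js ≠ k := by
        have := (Multiset.nodup_cons.1 hknd).1
        simp only [Multiset.mem_cons] at this
        tauto
      have hjsl₂ : js ∉ Ent l₂ := by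
        have := (Multiset.nodup_cons.1 hknd).1
        simp only [Multiset.mem_cons] at this
        tauto
      have hks : k ∈ s := by
        have : k ∈ Ent l' := by rw [hE]; exact Multiset.mem_cons_of_mem (Multiset.mem_cons_self _ _)
        exact Finset.mem_of_mem_erase (hl's k this)
      have hmvn : mval n l' = n js * n k + mval n l₂ := hmv n
      have hmvn' : mval n' l' = (n js - t) * n k + mval n l₂ := by
        rw [hmv n']
        have e1 : n' js = n js - t := by rw [hn', Function.update_self]
        have e2 : n' k = n k := Function.update_of_ne (Ne.symm hjk) _ _
        have e3 : mval n' l₂ = mval n l₂ := mval_congr fun x hx => by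
          rw [hn']; exact Function.update_of_ne (by rintro rfl; exact hjsl₂ hx) _ _
        rw [e1, e2, e3]
      have hl's2 : ∀ x ∈ Ent l', x ∈ s := fun x hx => Finset.mem_of_mem_erase (hl's x hx)
      refine ⟨l', hl's2, hl'nd, ?_⟩
      have h5 : n i0 * t ≤ t * n k :=
        le_trans (Nat.mul_le_mul_right t (hi0min k hks)) (le_of_eq (Nat.mul_comm _ _))
      have h6 : (n js - t) * n k + t * n k = n js * n k := by
        rw [← Nat.add_mul, Nat.sub_add_cancel htle]
      rw [hsplit]
      linarith [hl'bound, hX, h5, h6, hmvn, hmvn']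
    · refine ⟨(js, i0) :: l', ?_, ?_, ?_⟩
      · intro x hx
        rw [Ent_cons] at hx
        simp only [Multiset.mem_cons] at hx
        rcases hx with rfl | rfl | hx
        · exact hjss
        · exact hi0s
        · exact Finset.mem_of_mem_erase (hl's x hx)
      · rw [Ent_cons]
        refine Multiset.nodup_cons.2 ⟨?_, Multiset.nodup_cons.2 ⟨?_, hl'nd⟩⟩
        · simp only [Multiset.mem_cons]
          rintro (rfl | h)
          · exact hjne rfl
          · exact hmem h
        · intro h
          exact hi0ns' (hl's i0 h)
      · have hmvn : mval n ((js, i0) :: l') = n js * n i0 + mval n l' := mval_cons n _ _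
        have hmve : mval n' l' = mval n l' := mval_congr fun x hx => by
          rw [hn']; exact Function.update_of_ne (by rintro rfl; exact hmem hx) _ _
        have hti0 : n i0 * t ≤ n js * n i0 := by
          calc n i0 * t ≤ n i0 * n js := Nat.mul_le_mul_left _ htle
            _ = n js * n i0 := Nat.mul_comm _ _
        rw [hsplit, hmvn]
        rw [hmve] at hl'bound
        omega


lemma lemB : ∀ (r : ℕ) (n : ℕ → ℕ), (∀ i j : ℕ, i ≤ j → j < r → n j ≤ n i) →
    ∀ l : List (ℕ × ℕ), (∀ x ∈ Ent l, x < r) → (Ent l).Nodup →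
    mval n l ≤ ∑ k ∈ Finset.range (r/2), n (2*k) * n (2*k+1) := by
  intro r
  induction r using Nat.strong_induction_on with
  | _ r ih =>
  intro n hmono l hEr hnd
  rcases Nat.lt_or_ge r 2 with hr2 | hr2
  · cases l with
    | nil => simp [mval]
    | cons p l0 =>
        exfalso
        have e1 := hEr _ (fst_mem_Ent (List.mem_cons_self (a := p) (l := l0)))
        have e2 := hEr _ (snd_mem_Ent (List.mem_cons_self (a := p) (l := l0)))
        rw [Ent_cons] at hnd
        have h12 := (Multiset.nodup_cons.1 hnd).1
        have heq : p.1 = p.2 := by omega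
        exact h12 (heq ▸ Multiset.mem_cons_self _ _)
  · -- r ≥ 2
    have hgsplit : ∑ k ∈ Finset.range (r/2), n (2*k) * n (2*k+1)
        = n 0 * n 1 + ∑ k ∈ Finset.range ((r-2)/2), n (2*k+2) * n (2*k+3) := by
      rw [show r / 2 = (r-2)/2 + 1 by omega, Finset.sum_range_succ']
      have h1 : ∀ k : ℕ, n (2*(k+1)) * n (2*(k+1)+1) = n (2*k+2) * n (2*k+3) := by
        intro k
        rw [show 2*(k+1) = 2*k+2 by ring, show 2*k+2+1 = 2*k+3 by ring]
      rw [Finset.sum_congr rfl fun k _ => h1 k]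
      simp [Nat.add_comm]
    have step : ∀ l₃ : List (ℕ × ℕ), (∀ x ∈ Ent l₃, 2 ≤ x ∧ x < r) → (Ent l₃).Nodup →
        mval n l₃ ≤ ∑ k ∈ Finset.range ((r-2)/2), n (2*k+2) * n (2*k+3) := by
      intro l₃ hb hnd₃
      have hmono'' : ∀ i j : ℕ, i ≤ j → j < r - 2 → n (j+2) ≤ n (i+2) :=
        fun i j hij hj => hmono (i+2) (j+2) (by omega) (by omega)
      have hEsh := Ent_map (fun x => x - 2) l₃
      have hb' : ∀ x ∈ Ent (l₃.map (Prod.map (fun x => x - 2) (fun x => x - 2))), x < r - 2 := by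
        intro x hx
        rw [hEsh] at hx
        obtain ⟨y, hy, rfl⟩ := Multiset.mem_map.1 hx
        have := hb y hy
        omega
      have hnd' : (Ent (l₃.map (Prod.map (fun x => x - 2) (fun x => x - 2)))).Nodup := by
        rw [hEsh]
        refine Multiset.Nodup.map_on ?_ hnd₃
        intro x hx y hy hxy
        have := hb x hx; have := hb y hy
        omega
      have h1 : mval n l₃
          = mval (fun k => n (k+2)) (l₃.map (Prod.map (fun x => x - 2) (fun x => x - 2))) := by
        rw [mval_map]
        exact mval_congr fun x hx => by have h2 := (hb x hx).1; congr 1; omega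
      rw [h1]
      have h2 := ih (r-2) (by omega) (fun k => n (k+2)) hmono'' _ hb' hnd'
      refine le_trans h2 (le_of_eq (Finset.sum_congr rfl fun k _ => ?_))
      show n (2*k+2) * n (2*k+1+2) = n (2*k+2) * n (2*k+3)
      rw [show 2*k+1+2 = 2*k+3 by ring]
    rw [hgsplit]
    by_cases h0 : (0:ℕ) ∈ Ent l
    · obtain ⟨y, l₂, hE, hmv⟩ := extract h0
      have hnd2 : (0 ::ₘ y ::ₘ Ent l₂).Nodup := hE ▸ hnd
      have hy0 : y ≠ 0 := by
        have := (Multiset.nodup_cons.1 hnd2).1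
        simp only [Multiset.mem_cons] at this
        intro h; exact this (Or.inl h.symm)
      have h0l₂ : (0:ℕ) ∉ Ent l₂ := by
        have := (Multiset.nodup_cons.1 hnd2).1
        simp only [Multiset.mem_cons] at this
        intro h; exact this (Or.inr h)
      have hyl₂ : y ∉ Ent l₂ := (Multiset.nodup_cons.1 (Multiset.nodup_cons.1 hnd2).2).1
      have hndl₂ : (Ent l₂).Nodup := (Multiset.nodup_cons.1 (Multiset.nodup_cons.1 hnd2).2).2
      have hmem2 : ∀ x ∈ Ent l₂, x ∈ Ent l := by
        intro x hx; rw [hE]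
        exact Multiset.mem_cons_of_mem (Multiset.mem_cons_of_mem hx)
      have hyr : y < r := hEr y (by rw [hE]; exact Multiset.mem_cons_of_mem (Multiset.mem_cons_self _ _))
      by_cases hy1 : y = 1
      · subst hy1
        rw [hmv n]
        have : mval n l₂ ≤ ∑ k ∈ Finset.range ((r-2)/2), n (2*k+2) * n (2*k+3) := by
          refine step l₂ (fun x hx => ?_) hndl₂
          have hxr := hEr x (hmem2 x hx)
          have hx0 : x ≠ 0 := fun h => h0l₂ (h ▸ hx)
          have hx1 : x ≠ 1 := fun h => hyl₂ (h ▸ hx)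
          omega
        omega
      · have hy2 : 2 ≤ y := by omega
        have hny1 : n y ≤ n 1 := hmono 1 y (by omega) hyr
        by_cases h1 : (1:ℕ) ∈ Ent l₂
        · obtain ⟨z, l₃, hE₂, hmv₂⟩ := extract h1
          have hnd3 : (1 ::ₘ z ::ₘ Ent l₃).Nodup := hE₂ ▸ hndl₂
          have hz1 : z ≠ 1 := by
            have := (Multiset.nodup_cons.1 hnd3).1
            simp only [Multiset.mem_cons] at this
            intro h; exact this (Or.inl h.symm)
          have h1l₃ : (1:ℕ) ∉ Ent l₃ := by
            have := (Multiset.nodup_cons.1 hnd3).1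
            simp only [Multiset.mem_cons] at this
            intro h; exact this (Or.inr h)
          have hzl₃ : z ∉ Ent l₃ := (Multiset.nodup_cons.1 (Multiset.nodup_cons.1 hnd3).2).1
          have hndl₃ : (Ent l₃).Nodup := (Multiset.nodup_cons.1 (Multiset.nodup_cons.1 hnd3).2).2
          have hmem3 : ∀ x ∈ Ent l₃, x ∈ Ent l₂ := by
            intro x hx; rw [hE₂]
            exact Multiset.mem_cons_of_mem (Multiset.mem_cons_of_mem hx)
          have hz0 : z ≠ 0 := fun h =>
            h0l₂ (h ▸ (by rw [hE₂]; exact Multiset.mem_cons_of_mem (Multiset.mem_cons_self _ _)))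
          have hzr : z < r := hEr z (hmem2 z (by rw [hE₂]; exact Multiset.mem_cons_of_mem (Multiset.mem_cons_self _ _)))
          have hnz0 : n z ≤ n 0 := hmono 0 z (by omega) hzr
          have hyz : y ≠ z := by
            intro h
            exact hyl₂ (h ▸ (by rw [hE₂]; exact Multiset.mem_cons_of_mem (Multiset.mem_cons_self _ _)))
          have hyl₃ : y ∉ Ent l₃ := fun h => hyl₂ (hmem3 y h)
          -- the matching (y,z) :: l₃
          have hstep : mval n ((y,z) :: l₃) ≤ ∑ k ∈ Finset.range ((r-2)/2), n (2*k+2) * n (2*k+3) := by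
            refine step _ (fun x hx => ?_) ?_
            · rw [Ent_cons] at hx
              simp only [Multiset.mem_cons] at hx
              rcases hx with rfl | rfl | hx
              · exact ⟨hy2, hyr⟩
              · exact ⟨by omega, hzr⟩
              · have hxr := hEr x (hmem2 x (hmem3 x hx))
                have hx0 : x ≠ 0 := fun h => h0l₂ (h ▸ hmem3 x hx)
                have hx1 : x ≠ 1 := fun h => h1l₃ (h ▸ hx)
                omega
            · rw [Ent_cons]
              refine Multiset.nodup_cons.2 ⟨?_, Multiset.nodup_cons.2 ⟨hzl₃, hndl₃⟩⟩
              simp only [Multiset.mem_cons]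
              rintro (h | h)
              · exact hyz h
              · exact hyl₃ h
          rw [mval_cons] at hstep
          have hstep' : n y * n z + mval n l₃ ≤ ∑ k ∈ Finset.range ((r-2)/2), n (2*k+2) * n (2*k+3) := hstep
          rw [hmv n, hmv₂ n]
          have hexch : n 0 * n y + n 1 * n z ≤ n 0 * n 1 + n y * n z := by nlinarith
          omega
        · rw [hmv n]
          have : mval n l₂ ≤ ∑ k ∈ Finset.range ((r-2)/2), n (2*k+2) * n (2*k+3) := by
            refine step l₂ (fun x hx => ?_) hndl₂
            have hxr := hEr x (hmem2 x hx)
            have hx0 : x ≠ 0 := fun h => h0l₂ (h ▸ hx)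
            have hx1 : x ≠ 1 := fun h => h1 (h ▸ hx)
            omega
          have : n 0 * n y ≤ n 0 * n 1 := Nat.mul_le_mul_left _ hny1
          omega
    · by_cases h1 : (1:ℕ) ∈ Ent l
      · obtain ⟨y, l₂, hE, hmv⟩ := extract h1
        have hnd2 : (1 ::ₘ y ::ₘ Ent l₂).Nodup := hE ▸ hnd
        have hy1 : y ≠ 1 := by
          have := (Multiset.nodup_cons.1 hnd2).1
          simp only [Multiset.mem_cons] at this
          intro h; exact this (Or.inl h.symm)
        have h1l₂ : (1:ℕ) ∉ Ent l₂ := by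
          have := (Multiset.nodup_cons.1 hnd2).1
          simp only [Multiset.mem_cons] at this
          intro h; exact this (Or.inr h)
        have hndl₂ : (Ent l₂).Nodup := (Multiset.nodup_cons.1 (Multiset.nodup_cons.1 hnd2).2).2
        have hmem2 : ∀ x ∈ Ent l₂, x ∈ Ent l := by
          intro x hx; rw [hE]
          exact Multiset.mem_cons_of_mem (Multiset.mem_cons_of_mem hx)
        have hyr : y < r := hEr y (by rw [hE]; exact Multiset.mem_cons_of_mem (Multiset.mem_cons_self _ _))
        have hy0 : y ≠ 0 := fun h =>
          h0 (h ▸ (by rw [hE]; exact Multiset.mem_cons_of_mem (Multiset.mem_cons_self _ _)))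
        have hny0 : n y ≤ n 0 := hmono 0 y (by omega) hyr
        rw [hmv n]
        have : mval n l₂ ≤ ∑ k ∈ Finset.range ((r-2)/2), n (2*k+2) * n (2*k+3) := by
          refine step l₂ (fun x hx => ?_) hndl₂
          have hxr := hEr x (hmem2 x hx)
          have hx0 : x ≠ 0 := fun h => h0 (h ▸ hmem2 x hx)
          have hx1 : x ≠ 1 := fun h => h1l₂ (h ▸ hx)
          omega
        have : n 1 * n y ≤ n 0 * n 1 := by
          calc n 1 * n y ≤ n 1 * n 0 := Nat.mul_le_mul_left _ hny0
            _ = n 0 * n 1 := Nat.mul_comm _ _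
        omega
      · have : mval n l ≤ ∑ k ∈ Finset.range ((r-2)/2), n (2*k+2) * n (2*k+3) := by
          refine step l (fun x hx => ?_) hnd
          have hxr := hEr x hx
          have hx0 : x ≠ 0 := fun h => h0 (h ▸ hx)
          have hx1 : x ≠ 1 := fun h => h1 (h ▸ hx)
          omega
        omega


end AuxNoP3

/-- A subgraph of the complete `r`-partite graph with no multipartite `P₃` has at most
`n₁n₂ + n₃n₄ + ⋯` edges. -/
theorem edge_bound_no_multipartite_P3 (r : ℕ) (n : ℕ → ℕ) (hr : 3 ≤ r)
    (hmono : ∀ i j : ℕ, i ≤ j → j < r → n j ≤ n i)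
    (hpos : ∀ i : ℕ, i < r → 1 ≤ n i)
    (G : SimpleGraph ((i : Fin r) × Fin (n i))) (hG : G ≤ Kpartite r n)
    (hP3 : ¬ HasMultipartiteP3 G) :
    G.edgeSet.ncard ≤
      (if Odd r then ∑ i ∈ Finset.range ((r - 1) / 2), n (2 * i) * n (2 * i + 1)
       else ∑ i ∈ Finset.range (r / 2), n (2 * i) * n (2 * i + 1)) := by
  classical
  -- the goal's RHS equals the r/2-sum in both parities
  have hite : (if Odd r then ∑ i ∈ Finset.range ((r - 1) / 2), n (2 * i) * n (2 * i + 1)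
       else ∑ i ∈ Finset.range (r / 2), n (2 * i) * n (2 * i + 1))
      = ∑ i ∈ Finset.range (r / 2), n (2 * i) * n (2 * i + 1) := by
    by_cases h : Odd r
    · rw [if_pos h]
      have : (r - 1) / 2 = r / 2 := by rw [Nat.odd_iff] at h; omega
      rw [this]
    · rw [if_neg h]
  rw [hite]
  have hKadj : ∀ {u v : (i : Fin r) × Fin (n i)}, G.Adj u v → u.1 ≠ v.1 := by
    intro u v h
    have := hG h
    simpa [Kpartite] using this
  -- the sets A i j of vertices in part i with a neighbour in part j
  set A : Fin r → Fin r → Finset ((i : Fin r) × Fin (n i)) :=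
    fun i j => Finset.univ.filter (fun v => v.1 = i ∧ ∃ w, G.Adj v w ∧ w.1 = j) with hA
  have hAmem : ∀ (i j : Fin r) (v : (i : Fin r) × Fin (n i)),
      v ∈ A i j ↔ (v.1 = i ∧ ∃ w, G.Adj v w ∧ w.1 = j) := by
    intro i j v
    simp [hA]
  -- disjointness of A i j and A i j' for j ≠ j'
  have hAdisj : ∀ (i j j' : Fin r), j ≠ j' → Disjoint (A i j) (A i j') := by
    intro i j j' hjj'
    rw [Finset.disjoint_left]
    intro v hv hv'
    obtain ⟨hv1, w, hw, hwj⟩ := (hAmem i j v).1 hv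
    obtain ⟨_, w', hw', hwj'⟩ := (hAmem i j' v).1 hv'
    refine hP3 ⟨w, v, w', hw.symm, hw', ?_, hKadj hw', ?_⟩
    · exact fun h => (hKadj hw) h.symm
    · rw [hwj, hwj']; exact hjj'
  -- row sums
  have hrowsum : ∀ i : Fin r, ∑ j : Fin r, (A i j).card ≤ n i := by
    intro i
    have hdisj : ∀ j ∈ (Finset.univ : Finset (Fin r)), ∀ j' ∈ Finset.univ, j ≠ j' →
        Disjoint (A i j) (A i j') := fun j _ j' _ h => hAdisj i j j' h
    rw [← Finset.card_biUnion hdisj]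
    have hsub : (Finset.univ.biUnion (A i)) ⊆
        Finset.univ.filter (fun v : (i : Fin r) × Fin (n i) => v.1 = i) := by
      intro v hv
      obtain ⟨j, _, hvj⟩ := Finset.mem_biUnion.1 hv
      simp only [Finset.mem_filter, Finset.mem_univ, true_and]
      exact ((hAmem i j v).1 hvj).1
    refine le_trans (Finset.card_le_card hsub) (le_of_eq ?_)
    have hmapeq : (Finset.univ.filter fun v : (i : Fin r) × Fin (n i) => v.1 = i)
        = Finset.univ.map ⟨fun x : Fin (n i) => ⟨i, x⟩, fun x y h => by simpa using h⟩ := by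
      ext ⟨a, x⟩
      simp only [Finset.mem_filter, Finset.mem_univ, true_and, Finset.mem_map,
        Function.Embedding.coeFn_mk]
      constructor
      · rintro rfl; exact ⟨x, rfl⟩
      · rintro ⟨y, h⟩; cases h; rfl
    rw [hmapeq, Finset.card_map, Finset.card_univ, Fintype.card_fin]
  -- every neighbour of a vertex of A i j lies in A j i
  have hnbr : ∀ (i j : Fin r), ∀ v ∈ A i j, G.neighborFinset v ⊆ A j i := by
    intro i j v hv w hw
    rw [SimpleGraph.mem_neighborFinset] at hw
    obtain ⟨hv1, w0, hw0, hw0j⟩ := (hAmem i j v).1 hv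
    have hwj : w.1 = j := by
      by_contra hne
      refine hP3 ⟨w0, v, w, hw0.symm, hw, ?_, hKadj hw, ?_⟩
      · exact fun h => (hKadj hw0) h.symm
      · rw [hw0j]; exact fun h => hne h.symm
    exact (hAmem j i w).2 ⟨hwj, v, hw.symm, hv1⟩
  have hdeg : ∀ (i j : Fin r), ∀ v ∈ A i j, G.degree v ≤ (A j i).card := by
    intro i j v hv
    rw [← SimpleGraph.card_neighborFinset_eq_degree]
    exact Finset.card_le_card (hnbr i j v hv)
  -- the support of G decomposes along the A i j
  have hsupp : (Finset.univ.filter fun v : (i : Fin r) × Fin (n i) => G.degree v ≠ 0)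
      = (Finset.univ.offDiag).biUnion (fun p : Fin r × Fin r => A p.1 p.2) := by
    ext v
    rw [Finset.mem_filter, Finset.mem_biUnion]
    constructor
    · rintro ⟨-, hv⟩
      have hvpos : 0 < G.degree v := Nat.pos_of_ne_zero hv
      rw [← SimpleGraph.card_neighborFinset_eq_degree, Finset.card_pos] at hvpos
      obtain ⟨w, hw⟩ := hvpos
      rw [SimpleGraph.mem_neighborFinset] at hw
      exact ⟨(v.1, w.1), Finset.mem_offDiag.2 ⟨Finset.mem_univ _, Finset.mem_univ _, hKadj hw⟩,
        (hAmem v.1 w.1 v).2 ⟨rfl, w, hw, rfl⟩⟩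
    · rintro ⟨p, -, hv⟩
      refine ⟨Finset.mem_univ _, ?_⟩
      obtain ⟨-, w, hw, -⟩ := (hAmem p.1 p.2 v).1 hv
      have hwmem : w ∈ G.neighborFinset v := (SimpleGraph.mem_neighborFinset _ _ _).2 hw
      rw [← SimpleGraph.card_neighborFinset_eq_degree]
      intro hcard
      rw [Finset.card_eq_zero] at hcard
      rw [hcard] at hwmem
      exact absurd hwmem (Finset.notMem_empty _)
  -- pairwise disjointness of the pieces
  have hPD : (↑(Finset.univ.offDiag : Finset (Fin r × Fin r)) : Set (Fin r × Fin r)).PairwiseDisjoint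
      (fun p : Fin r × Fin r => A p.1 p.2) := by
    intro p hp q hq hpq
    simp only [Function.onFun]
    by_cases h1 : p.1 = q.1
    · have h2 : p.2 ≠ q.2 := by
        intro h2
        exact hpq (Prod.ext h1 h2)
      rw [← h1]
      exact hAdisj p.1 p.2 q.2 h2
    · rw [Finset.disjoint_left]
      intro v hv hv'
      have e1 := ((hAmem p.1 p.2 v).1 hv).1
      have e2 := ((hAmem q.1 q.2 v).1 hv').1
      exact h1 (by rw [← e1, ← e2])
  -- degree-sum bound
  have hdegsum : 2 * G.edgeFinset.card ≤
      ∑ p ∈ Finset.univ.offDiag, (A p.1 p.2).card * (A p.2 p.1).card := by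
    rw [← SimpleGraph.sum_degrees_eq_twice_card_edges]
    have h1 : ∑ v : (i : Fin r) × Fin (n i), G.degree v
        = ∑ v ∈ Finset.univ.filter (fun v : (i : Fin r) × Fin (n i) => G.degree v ≠ 0),
            G.degree v := by
      rw [Finset.sum_filter_of_ne]
      intro v _ hv
      exact hv
    rw [h1, hsupp, Finset.sum_biUnion hPD]
    refine Finset.sum_le_sum fun p hp => ?_
    calc ∑ v ∈ A p.1 p.2, G.degree v
        ≤ ∑ _v ∈ A p.1 p.2, (A p.2 p.1).card :=
          Finset.sum_le_sum fun v hv => hdeg p.1 p.2 v hv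
      _ = (A p.1 p.2).card * (A p.2 p.1).card := by
          rw [Finset.sum_const, smul_eq_mul]
  -- apply the two numeric lemmas
  obtain ⟨l, hls, hlnd, hlbound⟩ := lemA (fun i j : Fin r => (A i j).card)
    (Finset.univ : Finset (Fin r)) (fun i : Fin r => n i)
    (fun i _ => hrowsum i)
  set l' : List (ℕ × ℕ) := l.map (Prod.map Fin.val Fin.val) with hl'
  have hmv' : mval n l' = mval (fun i : Fin r => n i) l := by
    rw [hl', mval_map]
  have hEl' : Ent l' = (Ent l).map Fin.val := by
    rw [hl', Ent_map]
  have hbound' : ∀ x ∈ Ent l', x < r := by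
    intro x hx
    rw [hEl'] at hx
    obtain ⟨y, _, rfl⟩ := Multiset.mem_map.1 hx
    exact y.isLt
  have hnd' : (Ent l').Nodup := by
    rw [hEl']
    exact Multiset.Nodup.map Fin.val_injective hlnd
  have hB := lemB r n hmono l' hbound' hnd'
  rw [hmv'] at hB
  have hfinal : 2 * G.edgeFinset.card ≤ 2 * ∑ k ∈ Finset.range (r/2), n (2*k) * n (2*k+1) := by
    calc 2 * G.edgeFinset.card
        ≤ ∑ p ∈ Finset.univ.offDiag, (A p.1 p.2).card * (A p.2 p.1).card := hdegsum
      _ ≤ 2 * mval (fun i : Fin r => n i) l := hlbound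
      _ ≤ 2 * ∑ k ∈ Finset.range (r/2), n (2*k) * n (2*k+1) := by omega
  have hcard : G.edgeSet.ncard = G.edgeFinset.card := by
    rw [← SimpleGraph.coe_edgeFinset, Set.ncard_coe_finset]
  rw [hcard]
  omega
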